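/- Fix j ∈ {1,…,p}, fix ψ₀ ∈ ℝ, β ∈ ℝᵖ, and τ_ℓ for ℓ ≠ j, and let uⱼ = ψ₀βⱼ (A ∘ Xⱼ) ∈ ℝⁿ. Then τⱼ = 0 is a global minimizer of the function τⱼ ↦ Q(β₁,…,β_p, ψ₀, τ₁,…,τ_p) if and only if |(1/n)·uⱼᵀW R₍₋ⱼA₎| ≤ λα, where uⱼᵀW R₍₋ⱼA₎ = Σᵢ wᵢ (uⱼ)ᵢ (R₍₋ⱼA₎)ᵢ. -/

import Mathlib

/-- Soft-thresholding operator `S(x, u) = sign(x) · (|x| − u)₊`. -/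
noncomputable def softThresh (x u : ℝ) : ℝ := Real.sign x * max (|x| - u) 0

/-- Reparametrized weighted loss
`L*(θ) = (1/(2n)) Σᵢ wᵢ (Yᵢ − ψ₀Aᵢ − Σⱼ Xᵢⱼβⱼ − Σⱼ ψ₀τⱼβⱼ AᵢXᵢⱼ)²`. -/
noncomputable def Lstar (n p : ℕ) (Y A : Fin n → ℝ) (X : Fin n → Fin p → ℝ)
    (w : Fin n → ℝ) (β : Fin p → ℝ) (ψ0 : ℝ) (τ : Fin p → ℝ) : ℝ :=
  1 / (2 * (n : ℝ)) * ∑ i, w i *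
    (Y i - ψ0 * A i - (∑ j, X i j * β j) - ∑ j, ψ0 * τ j * β j * A i * X i j) ^ 2

/-- Penalized objective
`Q(θ) = L*(θ) + λ(1−α)(Σⱼ|βⱼ| + |ψ₀|) + λα Σⱼ|τⱼ|`. -/
noncomputable def Qobj (n p : ℕ) (Y A : Fin n → ℝ) (X : Fin n → Fin p → ℝ)
    (w : Fin n → ℝ) (lam alpha : ℝ) (β : Fin p → ℝ) (ψ0 : ℝ) (τ : Fin p → ℝ) : ℝ :=
  Lstar n p Y A X w β ψ0 τ
    + lam * (1 - alpha) * ((∑ j, |β j|) + |ψ0|) + lam * alpha * ∑ j, |τ j|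

/-- With `ψ₀`, `β`, and `τ_ℓ (ℓ ≠ j)` fixed and `uⱼ = ψ₀βⱼ (A ∘ Xⱼ)`,
`τⱼ = 0` is a global minimizer of `τⱼ ↦ Q(β, ψ₀, τ)` iff
`|(1/n)·uⱼᵀW R₍₋ⱼA₎| ≤ λα`. -/
theorem stmt8 (n p : ℕ) (hn : 1 ≤ n) (Y A : Fin n → ℝ) (X : Fin n → Fin p → ℝ)
    (w : Fin n → ℝ) (hw : ∀ i, 0 ≤ w i) (hA : ∀ i, A i = 0 ∨ A i = 1)
    (lam alpha : ℝ) (hlam : 0 ≤ lam) (halpha : 0 < alpha ∧ alpha < 1)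
    (j : Fin p) (ψ0 : ℝ) (β τ : Fin p → ℝ)
    (uj : Fin n → ℝ) (huj : uj = fun i => ψ0 * β j * A i * X i j) :
    let RmjA : Fin n → ℝ := fun i =>
      Y i - (∑ l, X i l * β l) - ψ0 * A i
        - ∑ l ∈ Finset.univ.erase j, ψ0 * τ l * β l * A i * X i l
    let f : ℝ → ℝ := fun t => Qobj n p Y A X w lam alpha β ψ0 (Function.update τ j t)
    (∀ t : ℝ, f 0 ≤ f t) ↔
      |1 / (n : ℝ) * ∑ i, w i * uj i * RmjA i| ≤ lam * alpha := by
  intro RmjA f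
  have hn' : (0:ℝ) < (n:ℝ) := by exact_mod_cast hn
  set S2 := ∑ i, w i * (uj i)^2 with hS2def
  set S1 := ∑ i, w i * uj i * RmjA i with hS1def
  have hS2 : 0 ≤ S2 := Finset.sum_nonneg fun i _ => mul_nonneg (hw i) (sq_nonneg _)
  have hla : 0 ≤ lam * alpha := mul_nonneg hlam halpha.1.le
  have hres : ∀ (t : ℝ) (i : Fin n),
      Y i - ψ0 * A i - (∑ l, X i l * β l)
        - (∑ l, ψ0 * Function.update τ j t l * β l * A i * X i l)
      = RmjA i - t * uj i := by
    intro t i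
    have hsum : (∑ l, ψ0 * Function.update τ j t l * β l * A i * X i l)
        = ψ0 * t * β j * A i * X i j
          + ∑ l ∈ Finset.univ.erase j, ψ0 * τ l * β l * A i * X i l := by
      rw [← Finset.add_sum_erase _ _ (Finset.mem_univ j)]
      congr 1
      · rw [Function.update_self]
      · exact Finset.sum_congr rfl fun l hl => by
          rw [Function.update_of_ne (Finset.ne_of_mem_erase hl)]
    rw [hsum, huj]
    simp only [RmjA]
    ring
  have hdiff : ∀ t : ℝ, f t - f 0 = t^2 * S2 / (2*n) - t * S1 / n + lam*alpha*|t| := by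
    intro t
    have key : ∀ s : ℝ, Lstar n p Y A X w β ψ0 (Function.update τ j s)
        = 1/(2*(n:ℝ)) * ∑ i, w i * (RmjA i - s * uj i)^2 := by
      intro s
      unfold Lstar
      congr 1
      exact Finset.sum_congr rfl fun i _ => by rw [hres s i]
    have hpen : ∀ s : ℝ, (∑ l, |Function.update τ j s l|)
        = |s| + ∑ l ∈ Finset.univ.erase j, |τ l| := by
      intro s
      rw [← Finset.add_sum_erase _ _ (Finset.mem_univ j)]
      congr 1
      rw [Function.update_self]
      exact Finset.sum_congr rfl fun l hl => by
        rw [Function.update_of_ne (Finset.ne_of_mem_erase hl)]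
    have hexp : ∀ s : ℝ, (∑ i, w i * (RmjA i - s * uj i)^2)
        = (∑ i, w i * (RmjA i)^2) - 2 * s * S1 + s^2 * S2 := by
      intro s
      rw [hS1def, hS2def, Finset.mul_sum, Finset.mul_sum, ← Finset.sum_sub_distrib,
        ← Finset.sum_add_distrib]
      exact Finset.sum_congr rfl fun i _ => by ring
    simp only [f, Qobj, key, hpen, hexp, abs_zero]
    field_simp
    ring
  constructor
  · intro hmin
    by_contra hlt
    push_neg at hlt
    set B := |1/(n:ℝ) * S1| with hBdef
    set c := B - lam*alpha with hcdef
    have hc : 0 < c := by simp only [hcdef]; linarith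
    set k := S2 / (2*(n:ℝ)) with hkdef
    have hk : 0 ≤ k := div_nonneg hS2 (by linarith)
    set s := c / (k+1) with hsdef
    have hs : 0 < s := div_pos hc (by linarith)
    have hks : k * s = c - s := by
      rw [hsdef]; field_simp; ring
    set t := if 0 ≤ S1 then s else -s with htdef
    have ht2 : t^2 = s^2 := by
      rcases le_or_gt 0 S1 with h | h
      · simp [htdef, h]
      · simp [htdef, not_le.mpr h]
    have e3 : |t| = s := by
      rcases le_or_gt 0 S1 with h | h
      · simp [htdef, h, abs_of_pos hs]
      · simp [htdef, not_le.mpr h, abs_of_pos hs]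
    have e2 : t * S1 / n = s * B := by
      have hB : B = 1/(n:ℝ) * |S1| := by
        rw [hBdef, abs_mul, abs_of_pos (by positivity : (0:ℝ) < 1/(n:ℝ))]
      rcases le_or_gt 0 S1 with h | h
      · have : t = s := by simp [htdef, h]
        rw [this, hB, abs_of_nonneg h]; field_simp
      · have : t = -s := by simp [htdef, not_le.mpr h]
        rw [this, hB, abs_of_neg h]; field_simp
    have e1 : t^2 * S2 / (2*(n:ℝ)) = s^2 * k := by
      rw [ht2, hkdef]; ring
    have hd := hdiff t
    rw [e1, e2, e3] at hd
    have h4 : s^2 * k = s*c - s^2 := by linear_combination s * hks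
    have hBc : s * B - lam*alpha*s = s * c := by rw [hcdef]; ring
    have hmt := hmin t
    have hs2 : 0 < s^2 := pow_pos hs 2
    linarith
  · intro hle t
    have hd := hdiff t
    have h1 : t * S1 / n ≤ |t| * (lam*alpha) := by
      calc t * S1 / n ≤ |t * S1 / n| := le_abs_self _
        _ = |t| * |1/(n:ℝ) * S1| := by
            rw [← abs_mul]; congr 1; ring
        _ ≤ |t| * (lam*alpha) := mul_le_mul_of_nonneg_left hle (abs_nonneg t)
    have h2 : 0 ≤ t^2 * S2 / (2*(n:ℝ)) := by positivity
    linarith
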